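/- Let u : ℝ → ℝ be twice continuously differentiable on an open set containing [0,1], and suppose u attains its minimum over [0,1] at a point h⋆ ∈ [0,1], i.e. u(h⋆) ≤ u(h) for all h ∈ [0,1]. If moreover u'(h⋆) = 0, then for every h ∈ [0,1], u(h) − u(h⋆) ≤ (2/3) · (∫₀¹ (u''(s))² ds)^{1/2} · |h − h⋆|^{3/2}. -/

import Mathlib

open intervalIntegral

/-- Elementary Cauchy–Schwarz for interval integrals of continuous functions. -/
lemma cs_aux {g : ℝ → ℝ} {a b : ℝ} (hab : a ≤ b) (hg : ContinuousOn g (Set.Icc a b)) :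
    (∫ x in a..b, g x) ^ 2 ≤ (b - a) * ∫ x in a..b, (g x) ^ 2 := by
  have huIcc : Set.uIcc a b = Set.Icc a b := Set.uIcc_of_le hab
  have hgi : IntervalIntegrable g MeasureTheory.volume a b := by
    apply ContinuousOn.intervalIntegrable; rwa [huIcc]
  have hg2i : IntervalIntegrable (fun x => (g x) ^ 2) MeasureTheory.volume a b := by
    apply ContinuousOn.intervalIntegrable; rw [huIcc]; exact (hg.pow 2)
  set I := ∫ x in a..b, g x with hI
  set J := ∫ x in a..b, (g x) ^ 2 with hJ
  have key : 0 ≤ ∫ x in a..b, ((b - a) * g x - I) ^ 2 :=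
    intervalIntegral.integral_nonneg hab (fun _ _ => sq_nonneg _)
  have expand : ∫ x in a..b, ((b - a) * g x - I) ^ 2
      = (b - a) ^ 2 * J - (b - a) * I ^ 2 := by
    have h1 : ∀ x, ((b - a) * g x - I) ^ 2
        = (b - a) ^ 2 * (g x) ^ 2 - (2 * (b - a) * I) * g x + I ^ 2 := by
      intro x; ring
    rw [intervalIntegral.integral_congr (g := fun x =>
      (b - a) ^ 2 * (g x) ^ 2 - (2 * (b - a) * I) * g x + I ^ 2) (fun x _ => h1 x)]
    rw [intervalIntegral.integral_add ((hg2i.const_mul _).sub (hgi.const_mul _))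
      intervalIntegrable_const,
      intervalIntegral.integral_sub (hg2i.const_mul _) (hgi.const_mul _),
      intervalIntegral.integral_const_mul, intervalIntegral.integral_const_mul,
      intervalIntegral.integral_const]
    simp only [smul_eq_mul, ← hI, ← hJ]
    ring
  rw [expand] at key
  rcases eq_or_lt_of_le hab with h | h
  · subst h; simp [hI, hJ]
  · nlinarith [sq_nonneg I]

/-- Minimum-point Hölder-type estimate: if `u` is `C²` on an open set containing
`[0,1]`, attains its minimum over `[0,1]` at `h⋆` with `u'(h⋆) = 0`, then
`u(h) − u(h⋆) ≤ (2/3)·‖u''‖_{L²([0,1])}·|h − h⋆|^{3/2}` for every `h ∈ [0,1]`. -/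
theorem lemma_min_point_holder_estimate
    (u : ℝ → ℝ) (s : Set ℝ) (hs : IsOpen s) (hsub : Set.Icc (0:ℝ) 1 ⊆ s)
    (hu : ContDiffOn ℝ 2 u s)
    (hstar : ℝ) (hmem : hstar ∈ Set.Icc (0:ℝ) 1)
    (hmin : ∀ h ∈ Set.Icc (0:ℝ) 1, u hstar ≤ u h)
    (hcrit : deriv u hstar = 0) :
    ∀ h ∈ Set.Icc (0:ℝ) 1,
      u h - u hstar
        ≤ (2 / 3) * Real.sqrt (∫ x in (0:ℝ)..1, (iteratedDeriv 2 u x) ^ 2)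
            * |h - hstar| ^ ((3:ℝ) / 2) := by
  -- notation
  set g := deriv (deriv u) with hg
  have hiter : iteratedDeriv 2 u = g := by
    rw [iteratedDeriv_succ, iteratedDeriv_one]
  -- deriv u is C¹ on s, g is continuous on s
  have hdu1 : ContDiffOn ℝ 1 (deriv u) s := by
    have := hu.deriv_of_isOpen hs (m := 1) (by norm_num)
    exact this
  have hgc : ContinuousOn g s := hdu1.continuousOn_deriv_of_isOpen hs le_rfl
  have hduc : ContinuousOn (deriv u) s := hdu1.continuousOn
  -- HasDerivAt facts
  have hder1 : ∀ x ∈ s, HasDerivAt u (deriv u x) x := by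
    intro x hx
    exact ((hu.differentiableOn (by norm_num)).differentiableAt
      (hs.mem_nhds hx)).hasDerivAt
  have hder2 : ∀ x ∈ s, HasDerivAt (deriv u) (g x) x := by
    intro x hx
    exact ((hdu1.differentiableOn (by norm_num)).differentiableAt
      (hs.mem_nhds hx)).hasDerivAt
  set C := Real.sqrt (∫ x in (0:ℝ)..1, (iteratedDeriv 2 u x) ^ 2) with hC
  have hCnn : 0 ≤ C := Real.sqrt_nonneg _
  have hJnn : 0 ≤ ∫ x in (0:ℝ)..1, (g x) ^ 2 :=
    intervalIntegral.integral_nonneg (by norm_num) (fun _ _ => sq_nonneg _)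
  have hg2i01 : IntervalIntegrable (fun x => (g x) ^ 2) MeasureTheory.volume 0 1 := by
    apply ContinuousOn.intervalIntegrable
    rw [Set.uIcc_of_le (by norm_num : (0:ℝ) ≤ 1)]
    exact ((hgc.mono hsub).pow 2)
  -- key pointwise bound on deriv u
  have hbound : ∀ t ∈ Set.Icc (0:ℝ) 1, |deriv u t| ≤ Real.sqrt |t - hstar| * C := by
    intro t ht
    have hsubuIcc : Set.uIcc hstar t ⊆ Set.Icc (0:ℝ) 1 := Set.uIcc_subset_Icc hmem ht
    have hftc : deriv u t - deriv u hstar = ∫ x in hstar..t, g x := by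
      rw [eq_comm]
      apply intervalIntegral.integral_eq_sub_of_hasDerivAt
      · intro x hx; exact hder2 x (hsub (hsubuIcc hx))
      · apply ContinuousOn.intervalIntegrable
        exact (hgc.mono (fun x hx => hsub (hsubuIcc hx)))
    rw [hcrit, sub_zero] at hftc
    have key : (deriv u t) ^ 2 ≤ |t - hstar| * ∫ x in (0:ℝ)..1, (g x) ^ 2 := by
      rcases le_total hstar t with hle | hle
      · have hIcc : Set.Icc hstar t ⊆ Set.Icc (0:ℝ) 1 := Set.uIcc_of_le hle ▸ hsubuIcc
        have hcs := cs_aux hle (hgc.mono (fun x hx => hsub (hIcc hx)))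
        have hmono : (∫ x in hstar..t, (g x) ^ 2) ≤ ∫ x in (0:ℝ)..1, (g x) ^ 2 :=
          intervalIntegral.integral_mono_interval hmem.1 hle ht.2
            (Filter.Eventually.of_forall (fun x => sq_nonneg _)) hg2i01
        rw [hftc, abs_of_nonneg (sub_nonneg.mpr hle)]
        calc (∫ x in hstar..t, g x) ^ 2 ≤ (t - hstar) * ∫ x in hstar..t, (g x) ^ 2 := hcs
          _ ≤ (t - hstar) * ∫ x in (0:ℝ)..1, (g x) ^ 2 :=
            mul_le_mul_of_nonneg_left hmono (sub_nonneg.mpr hle)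
      · have hIcc : Set.Icc t hstar ⊆ Set.Icc (0:ℝ) 1 :=
          Set.uIcc_of_ge hle ▸ hsubuIcc
        have hcs := cs_aux hle (hgc.mono (fun x hx => hsub (hIcc hx)))
        have hmono : (∫ x in t..hstar, (g x) ^ 2) ≤ ∫ x in (0:ℝ)..1, (g x) ^ 2 :=
          intervalIntegral.integral_mono_interval ht.1 hle hmem.2
            (Filter.Eventually.of_forall (fun x => sq_nonneg _)) hg2i01
        have hswap : (∫ x in hstar..t, g x) = -(∫ x in t..hstar, g x) :=
          intervalIntegral.integral_symm t hstar
        rw [hftc, hswap, neg_pow, abs_of_nonpos (sub_nonpos.mpr hle)]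
        have : -(t - hstar) = hstar - t := by ring
        rw [this]
        calc (-1 : ℝ) ^ 2 * (∫ x in t..hstar, g x) ^ 2
            = (∫ x in t..hstar, g x) ^ 2 := by ring
          _ ≤ (hstar - t) * ∫ x in t..hstar, (g x) ^ 2 := hcs
          _ ≤ (hstar - t) * ∫ x in (0:ℝ)..1, (g x) ^ 2 :=
            mul_le_mul_of_nonneg_left hmono (sub_nonneg.mpr hle)
    calc |deriv u t| = Real.sqrt ((deriv u t) ^ 2) := (Real.sqrt_sq_eq_abs _).symm
        _ ≤ Real.sqrt (|t - hstar| * ∫ x in (0:ℝ)..1, (g x) ^ 2) := Real.sqrt_le_sqrt key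
        _ = Real.sqrt |t - hstar| * C := by
            rw [Real.sqrt_mul (abs_nonneg _), hC, hiter]
  -- interval integrability of deriv u
  have hdui : ∀ a b : ℝ, a ∈ Set.Icc (0:ℝ) 1 → b ∈ Set.Icc (0:ℝ) 1 →
      IntervalIntegrable (deriv u) MeasureTheory.volume a b := by
    intro a b ha hb
    apply ContinuousOn.intervalIntegrable
    exact hduc.mono (fun x hx => hsub (Set.uIcc_subset_Icc ha hb hx))
  -- FTC for u
  intro h hh
  have hftc : u h - u hstar = ∫ t in hstar..h, deriv u t := by
    rw [eq_comm]
    apply intervalIntegral.integral_eq_sub_of_hasDerivAt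
    · intro x hx; exact hder1 x (hsub (Set.uIcc_subset_Icc hmem hh hx))
    · exact hdui _ _ hmem hh
  -- the sqrt integral computation
  have hsqrt_int : ∀ c : ℝ, 0 ≤ c → (∫ x in (0:ℝ)..c, Real.sqrt x) = (2/3) * c ^ ((3:ℝ)/2) := by
    intro c hc
    have h1 : (∫ x in (0:ℝ)..c, Real.sqrt x) = ∫ x in (0:ℝ)..c, x ^ ((1:ℝ)/2) := by
      apply intervalIntegral.integral_congr
      intro x _; exact Real.sqrt_eq_rpow x
    rw [h1, integral_rpow (Or.inl (by norm_num))]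
    rw [Real.zero_rpow (by norm_num)]
    norm_num
    ring_nf
  -- bound pointwise function
  have hsqrtcont : ∀ c : ℝ, Continuous (fun t : ℝ => Real.sqrt |t - c| * C) := by
    intro c
    exact (Real.continuous_sqrt.comp ((continuous_id.sub continuous_const).abs)).mul
      continuous_const
  rcases le_total hstar h with hle | hle
  · have habs : |h - hstar| = h - hstar := abs_of_nonneg (sub_nonneg.mpr hle)
    have hb : (∫ t in hstar..h, deriv u t)
        ≤ ∫ t in hstar..h, Real.sqrt |t - hstar| * C := by
      apply intervalIntegral.integral_mono_on hle (hdui _ _ hmem hh)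
        ((hsqrtcont hstar).intervalIntegrable _ _)
      intro t htm
      have htIcc : t ∈ Set.Icc (0:ℝ) 1 := Set.uIcc_subset_Icc hmem hh
        (by rw [Set.uIcc_of_le hle]; exact htm)
      exact (le_abs_self _).trans (hbound t htIcc)
    have hcomp : (∫ t in hstar..h, Real.sqrt |t - hstar| * C)
        = (2/3) * (h - hstar) ^ ((3:ℝ)/2) * C := by
      rw [intervalIntegral.integral_mul_const]
      have h2 : (∫ t in hstar..h, Real.sqrt |t - hstar|)
          = ∫ x in (0:ℝ)..(h - hstar), Real.sqrt |x| := by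
        have := intervalIntegral.integral_comp_sub_right
          (f := fun x => Real.sqrt |x|) (a := hstar) (b := h) hstar
        simpa using this
      rw [h2]
      have h3 : (∫ x in (0:ℝ)..(h - hstar), Real.sqrt |x|)
          = ∫ x in (0:ℝ)..(h - hstar), Real.sqrt x := by
        apply intervalIntegral.integral_congr
        intro x hx
        rw [Set.uIcc_of_le (sub_nonneg.mpr hle)] at hx
        show Real.sqrt |x| = Real.sqrt x
        rw [abs_of_nonneg hx.1]
      rw [h3, hsqrt_int _ (sub_nonneg.mpr hle)]
    rw [hftc, habs]
    calc (∫ t in hstar..h, deriv u t) ≤ (2/3) * (h - hstar) ^ ((3:ℝ)/2) * C := by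
          rw [← hcomp]; exact hb
      _ = 2 / 3 * C * (h - hstar) ^ ((3:ℝ)/2) := by ring
  · have habs : |h - hstar| = hstar - h := by
      rw [abs_of_nonpos (sub_nonpos.mpr hle), neg_sub]
    have hswap : (∫ t in hstar..h, deriv u t) = -(∫ t in h..hstar, deriv u t) :=
      intervalIntegral.integral_symm h hstar
    have hb : (∫ t in h..hstar, -deriv u t)
        ≤ ∫ t in h..hstar, Real.sqrt |t - hstar| * C := by
      apply intervalIntegral.integral_mono_on hle ((hdui _ _ hh hmem).neg)
        ((hsqrtcont hstar).intervalIntegrable _ _)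
      intro t htm
      have htIcc : t ∈ Set.Icc (0:ℝ) 1 := Set.uIcc_subset_Icc hh hmem
        (by rw [Set.uIcc_of_le hle]; exact htm)
      exact (neg_le_abs _).trans (hbound t htIcc)
    have hcomp : (∫ t in h..hstar, Real.sqrt |t - hstar| * C)
        = (2/3) * (hstar - h) ^ ((3:ℝ)/2) * C := by
      rw [intervalIntegral.integral_mul_const]
      have h2 : (∫ t in h..hstar, Real.sqrt |t - hstar|)
          = ∫ x in (h - hstar)..(0:ℝ), Real.sqrt |x| := by
        have := intervalIntegral.integral_comp_sub_right
          (f := fun x => Real.sqrt |x|) (a := h) (b := hstar) hstar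
        simpa using this
      rw [h2]
      have h4 : (∫ x in (h - hstar)..(0:ℝ), Real.sqrt |x|)
          = ∫ x in (0:ℝ)..(hstar - h), Real.sqrt |x| := by
        have hneg := intervalIntegral.integral_comp_neg
          (f := fun x => Real.sqrt |x|) (a := h - hstar) (b := 0)
        have hcong : (∫ x in (h - hstar)..(0:ℝ), Real.sqrt |x|)
            = ∫ x in (h - hstar)..(0:ℝ), Real.sqrt |(-x)| := by
          apply intervalIntegral.integral_congr
          intro x _
          show Real.sqrt |x| = Real.sqrt |(-x)|
          rw [abs_neg]
        rw [hcong]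
        simpa [neg_sub] using hneg
      rw [h4]
      have h5 : (∫ x in (0:ℝ)..(hstar - h), Real.sqrt |x|)
          = ∫ x in (0:ℝ)..(hstar - h), Real.sqrt x := by
        apply intervalIntegral.integral_congr
        intro x hx
        rw [Set.uIcc_of_le (sub_nonneg.mpr hle)] at hx
        show Real.sqrt |x| = Real.sqrt x
        rw [abs_of_nonneg hx.1]
      rw [h5, hsqrt_int _ (sub_nonneg.mpr hle)]
    have hb' : (∫ t in h..hstar, -deriv u t)
        ≤ (2/3) * (hstar - h) ^ ((3:ℝ)/2) * C := hcomp ▸ hb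
    rw [hftc, hswap, habs]
    have hnegint : -(∫ t in h..hstar, deriv u t) = ∫ t in h..hstar, -deriv u t :=
      (intervalIntegral.integral_neg).symm
    rw [hnegint]
    calc (∫ t in h..hstar, -deriv u t) ≤ (2/3) * (hstar - h) ^ ((3:ℝ)/2) * C := hb'
      _ = 2 / 3 * C * (hstar - h) ^ ((3:ℝ)/2) := by ring
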